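/- Let $\hat{W}_n = \sum_{j\geq 1} X_{n,j}/n$ with $X_{n,j}$ independent Binomial$(n,p_j)$ and $W = \sum_j p_j < \infty$. Then $\mathbb{E}[\hat{W}_n] = W$ and for all $0 < \lambda < n$, $\log \mathbb{E}\, e^{\lambda(\hat{W}_n - W)} \leq \frac{(2W/n)\,\lambda^2}{2(1-\lambda/n)}$. -/

import Mathlib

open MeasureTheory ProbabilityTheory Real
open scoped ENNReal

lemma binom_mean (n : ℕ) (hn : 1 ≤ n) (p : ℝ) :
    ∑ k ∈ Finset.range (n+1), (k:ℝ) * ((n.choose k : ℝ) * p ^ k * (1-p) ^ (n-k)) = n * p := by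
  obtain ⟨m, rfl⟩ : ∃ m, n = m + 1 := ⟨n-1, (Nat.succ_pred_eq_of_pos hn).symm⟩
  rw [Finset.sum_range_succ']
  simp only [Nat.cast_zero, zero_mul, add_zero]
  have hterm : ∀ i ∈ Finset.range (m+1),
      ((i+1 : ℕ):ℝ) * (((m+1).choose (i+1) : ℝ) * p ^ (i+1) * (1-p) ^ ((m+1)-(i+1)))
      = ((m+1 : ℕ):ℝ) * p * ((m.choose i : ℝ) * p ^ i * (1-p) ^ (m-i)) := by
    intro i _
    have hc : ((m+1 : ℕ):ℝ) * (m.choose i : ℝ) = ((m+1).choose (i+1) : ℝ) * ((i+1:ℕ):ℝ) := by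
      exact_mod_cast congrArg (Nat.cast : ℕ → ℝ) (Nat.add_one_mul_choose_eq m i)
    have hsub : (m+1) - (i+1) = m - i := by omega
    rw [hsub]
    push_cast at hc ⊢
    linear_combination (-(p ^ (i+1) * (1-p) ^ (m-i))) * hc
  rw [Finset.sum_congr rfl (by exact_mod_cast hterm)]
  rw [← Finset.mul_sum]
  have hsum1 : ∑ i ∈ Finset.range (m+1), (m.choose i : ℝ) * p ^ i * (1-p) ^ (m-i) = 1 := by
    have hb := add_pow p (1-p) m
    have h1 : (p + (1-p)) ^ m = 1 := by norm_num
    rw [h1] at hb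
    conv_rhs => rw [hb]
    exact Finset.sum_congr rfl fun i _ => by ring
  rw [hsum1, mul_one]

lemma binom_mgf (n : ℕ) (p t : ℝ) :
    ∑ k ∈ Finset.range (n+1), Real.exp (t*k) * ((n.choose k : ℝ) * p ^ k * (1-p) ^ (n-k))
      = (1 - p + p * Real.exp t) ^ n := by
  have h : (1 - p + p * Real.exp t) = (p * Real.exp t) + (1-p) := by ring
  rw [h, add_pow]
  refine Finset.sum_congr rfl fun k _ => ?_
  rw [mul_comm t (k:ℝ), Real.exp_nat_mul, mul_pow]
  ring

lemma exp_quad {t : ℝ} (h0 : 0 ≤ t) (h1 : t ≤ 1) : Real.exp t ≤ 1 + t + t ^ 2 := by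
  calc Real.exp t ≤ _ := Real.exp_bound' h0 h1 zero_lt_three
    _ ≤ 1 + t + t ^ 2 := by
      erw [Finset.sum_range_succ]
      repeat rw [Finset.sum_range_succ]
      norm_num [Nat.factorial]
      nlinarith [pow_nonneg h0 3, pow_nonneg h0 2]

theorem stmt
    {Ω : Type*} [MeasurableSpace Ω] (μ : Measure Ω) [IsProbabilityMeasure μ]
    (p : ℕ → ℝ) (hp : ∀ j, p j ∈ Set.Ioo (0 : ℝ) 1) (hsum : Summable p)
    (n : ℕ) (X : ℕ → Ω → ℕ)
    (hmeas : ∀ j, Measurable (X j))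
    (hindep : iIndepFun X μ)
    (hbin : ∀ j k, μ {ω | X j ω = k} =
      ENNReal.ofReal ((n.choose k : ℝ) * p j ^ k * (1 - p j) ^ (n - k)))
    (W : ℝ) (hW : ∑' j, p j = W) (hn : 1 ≤ n) :
    (∫ ω, (∑' j, (X j ω : ℝ)) / n ∂μ) = W ∧
    ∀ lam : ℝ, 0 < lam → lam < n →
      Real.log (∫ ω, Real.exp (lam * ((∑' j, (X j ω : ℝ)) / n - W)) ∂μ)
        ≤ (2 * W / n) * lam ^ 2 / (2 * (1 - lam / n)) := by
  have hnR : (0:ℝ) < n := by exact_mod_cast hn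
  have hW0 : 0 ≤ W := hW ▸ tsum_nonneg fun j => (hp j).1.le
  have hpmf0 : ∀ j k, 0 ≤ (n.choose k : ℝ) * p j ^ k * (1 - p j) ^ (n-k) := by
    intro j k
    have h1 := (hp j).1
    have h2 : (0:ℝ) ≤ 1 - p j := by linarith [(hp j).2]
    positivity
  -- distributional lintegral formula
  have hdist : ∀ (j : ℕ) (f : ℕ → ℝ≥0∞), ∫⁻ ω, f (X j ω) ∂μ
      = ∑' k, f k * ENNReal.ofReal ((n.choose k : ℝ) * p j ^ k * (1 - p j) ^ (n-k)) := by
    intro j f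
    rw [← MeasureTheory.lintegral_map measurable_from_nat (hmeas j),
      MeasureTheory.lintegral_countable']
    refine tsum_congr fun k => ?_
    rw [Measure.map_apply (hmeas j) (measurableSet_singleton k)]
    have hpre : X j ⁻¹' {k} = {ω | X j ω = k} := rfl
    rw [hpre, hbin j k]
  have hdistR : ∀ (j : ℕ) (g : ℕ → ℝ), (∀ k, 0 ≤ g k) →
      ∫⁻ ω, ENNReal.ofReal (g (X j ω)) ∂μ
        = ENNReal.ofReal (∑ k ∈ Finset.range (n+1),
            g k * ((n.choose k : ℝ) * p j ^ k * (1 - p j) ^ (n-k))) := by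
    intro j g hg
    rw [hdist j fun k => ENNReal.ofReal (g k)]
    rw [tsum_eq_sum (s := Finset.range (n+1)) (fun k hk => by
      have hlt : n < k := by simpa using Finset.mem_range.not.mp hk
      rw [Nat.choose_eq_zero_of_lt hlt]
      simp)]
    rw [ENNReal.ofReal_sum_of_nonneg fun k _ => mul_nonneg (hg k) (hpmf0 j k)]
    exact Finset.sum_congr rfl fun k _ => (ENNReal.ofReal_mul (hg k)).symm
  -- mean of each binomial
  have hmeanj : ∀ j, ∫⁻ ω, ((X j ω : ℕ) : ℝ≥0∞) ∂μ = ENNReal.ofReal (n * p j) := by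
    intro j
    have h := hdistR j (fun k => (k:ℝ)) (fun k => k.cast_nonneg)
    rw [binom_mean n hn (p j)] at h
    rw [← h]
    exact lintegral_congr fun ω => (ENNReal.ofReal_natCast _).symm
  -- the sum S' and T
  set S' : Ω → ℝ≥0∞ := fun ω => ∑' j, ((X j ω : ℕ) : ℝ≥0∞) with hS'
  have hTdef : ∀ ω, (∑' j, (X j ω : ℝ)) = (S' ω).toReal := by
    intro ω
    rw [hS', ENNReal.tsum_toReal_eq fun j => ENNReal.natCast_ne_top _]
    exact tsum_congr fun j => by simp
  set T : Ω → ℝ := fun ω => ∑' j, (X j ω : ℝ) with hT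
  have hS'meas : Measurable S' :=
    Measurable.ennreal_tsum fun j => measurable_from_nat.comp (hmeas j)
  have hS'int : ∫⁻ ω, S' ω ∂μ = ENNReal.ofReal (n * W) := by
    show ∫⁻ ω, ∑' j, ((X j ω : ℕ) : ℝ≥0∞) ∂μ = _
    have hXm : ∀ j, AEMeasurable (fun ω => ((X j ω : ℕ) : ℝ≥0∞)) μ := fun j =>
      (measurable_from_nat.comp (hmeas j)).aemeasurable
    rw [MeasureTheory.lintegral_tsum hXm]
    calc ∑' j, ∫⁻ ω, ((X j ω : ℕ) : ℝ≥0∞) ∂μ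
        = ∑' j, ENNReal.ofReal ((n:ℝ) * p j) := tsum_congr hmeanj
      _ = ENNReal.ofReal (∑' j, (n:ℝ) * p j) :=
          (ENNReal.ofReal_tsum_of_nonneg (fun j => mul_nonneg (Nat.cast_nonneg n) (hp j).1.le)
            (hsum.mul_left _)).symm
      _ = ENNReal.ofReal ((n:ℝ) * W) := by rw [tsum_mul_left, hW]
  have hfin : ∀ᵐ ω ∂μ, S' ω ≠ ⊤ :=
    (ae_lt_top hS'meas (by rw [hS'int]; exact ENNReal.ofReal_ne_top)).mono fun ω h => h.ne
  have hTmeas : Measurable T := by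
    have h : T = fun ω => (S' ω).toReal := funext hTdef
    rw [h]
    exact hS'meas.ennreal_toReal
  have hT0 : ∀ ω, 0 ≤ T ω := fun ω => tsum_nonneg fun j => (X j ω).cast_nonneg
  have hint1 : ∫ ω, T ω ∂μ = n * W := by
    rw [MeasureTheory.integral_eq_lintegral_of_nonneg_ae (Filter.Eventually.of_forall hT0)
      hTmeas.aestronglyMeasurable]
    have hofReal : ∀ ω, S' ω ≠ ⊤ → ENNReal.ofReal (∑' j, (X j ω : ℝ)) = S' ω := fun ω hω => by
      rw [hTdef ω, ENNReal.ofReal_toReal hω]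
    have h : ∫⁻ ω, ENNReal.ofReal (T ω) ∂μ = ∫⁻ ω, S' ω ∂μ := by
      refine lintegral_congr_ae (hfin.mono fun ω hω => ?_)
      exact hofReal ω hω
    rw [h, hS'int, ENNReal.toReal_ofReal (mul_nonneg (Nat.cast_nonneg n) hW0)]
  constructor
  · change ∫ ω, T ω / n ∂μ = W
    rw [integral_div, hint1, mul_comm, mul_div_assoc, div_self (ne_of_gt hnR), mul_one]
  · intro lam hl0 hln
    set t : ℝ := lam / n with htdef
    have ht0 : 0 < t := div_pos hl0 hnR
    have ht1 : t < 1 := (div_lt_one hnR).2 hln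
    have hlamt : lam = t * n := by rw [htdef]; field_simp
    set Y : ℕ → Ω → ℝ := fun j ω => (X j ω : ℝ) with hYdef
    have hYmeas : ∀ j, Measurable (Y j) := fun j => measurable_from_nat.comp (hmeas j)
    have hYindep : iIndepFun Y μ :=
      hindep.comp (fun _ k => (k:ℝ)) (fun _ => measurable_from_nat)
    -- boundedness
    have hbdd : ∀ j, ∀ᵐ ω ∂μ, X j ω ≤ n := by
      intro j
      rw [ae_iff]
      have hsub : {ω | ¬ X j ω ≤ n} ⊆ ⋃ k : ℕ, {ω | X j ω = n + 1 + k} := by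
        intro ω hω
        simp only [Set.mem_setOf_eq, not_le] at hω
        exact Set.mem_iUnion.2 ⟨X j ω - (n+1), by simp only [Set.mem_setOf_eq]; omega⟩
      refine measure_mono_null hsub (measure_iUnion_null fun k => ?_)
      rw [hbin j (n+1+k), Nat.choose_eq_zero_of_lt (by omega)]
      simp
    have hintj : ∀ j, Integrable (fun ω => Real.exp (t * Y j ω)) μ := by
      intro j
      refine Integrable.mono' (integrable_const (Real.exp (t * n)))
        (((hYmeas j).const_mul t).exp.aestronglyMeasurable) ?_
      filter_upwards [hbdd j] with ω hω
      rw [Real.norm_eq_abs, abs_of_pos (Real.exp_pos _)]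
      have hle : (X j ω : ℝ) ≤ (n : ℝ) := by exact_mod_cast hω
      exact Real.exp_le_exp.2 (mul_le_mul_of_nonneg_left hle ht0.le)
    -- mgf of each
    have hmgflint : ∀ j, ∫⁻ ω, ENNReal.ofReal (Real.exp (t * Y j ω)) ∂μ
        = ENNReal.ofReal ((1 - p j + p j * Real.exp t) ^ n) := by
      intro j
      have h := hdistR j (fun k => Real.exp (t * k)) (fun k => (Real.exp_pos _).le)
      rw [binom_mgf n (p j) t] at h
      exact h
    have hbase0 : ∀ j, (0:ℝ) ≤ 1 - p j + p j * Real.exp t := by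
      intro j
      have h2 : (0:ℝ) ≤ 1 - p j := by linarith [(hp j).2]
      have := (hp j).1
      nlinarith [Real.exp_pos t]
    have hmgfj : ∀ j, mgf (Y j) μ t = (1 - p j + p j * Real.exp t) ^ n := by
      intro j
      have h1 := MeasureTheory.ofReal_integral_eq_lintegral_ofReal (hintj j)
        (Filter.Eventually.of_forall fun ω => (Real.exp_pos _).le)
      rw [hmgflint j] at h1
      have h2 : 0 ≤ ∫ ω, Real.exp (t * Y j ω) ∂μ :=
        integral_nonneg fun ω => (Real.exp_pos _).le
      exact (ENNReal.ofReal_eq_ofReal_iff h2 (pow_nonneg (hbase0 j) n)).1 h1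
    have hmgfbd : ∀ j, mgf (Y j) μ t ≤ Real.exp ((n:ℝ) * p j * (Real.exp t - 1)) := by
      intro j
      rw [hmgfj j]
      have hb : 1 - p j + p j * Real.exp t ≤ Real.exp (p j * (Real.exp t - 1)) := by
        have := Real.add_one_le_exp (p j * (Real.exp t - 1))
        linarith
      calc (1 - p j + p j * Real.exp t) ^ n
          ≤ (Real.exp (p j * (Real.exp t - 1))) ^ n := pow_le_pow_left₀ (hbase0 j) hb n
        _ = Real.exp ((n:ℝ) * (p j * (Real.exp t - 1))) := (Real.exp_nat_mul _ n).symm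
        _ = Real.exp ((n:ℝ) * p j * (Real.exp t - 1)) := by rw [mul_assoc]
    have hexpt1 : 0 ≤ Real.exp t - 1 := by linarith [Real.one_le_exp ht0.le]
    -- finite partial sums
    have hSm_int : ∀ m, Integrable (fun ω => Real.exp (t * (∑ j ∈ Finset.range m, Y j) ω)) μ :=
      fun m => hYindep.integrable_exp_mul_sum hYmeas (fun j _ => hintj j)
    have hSm_mgf : ∀ m, mgf (∑ j ∈ Finset.range m, Y j) μ t
        ≤ Real.exp ((Real.exp t - 1) * ((n:ℝ) * W)) := by
      intro m
      rw [hYindep.mgf_sum hYmeas]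
      have hps : ∑ j ∈ Finset.range m, p j ≤ W :=
        hW ▸ Summable.sum_le_tsum _ (fun j _ => (hp j).1.le) hsum
      have hps0 : 0 ≤ ∑ j ∈ Finset.range m, p j :=
        Finset.sum_nonneg fun j _ => (hp j).1.le
      calc ∏ j ∈ Finset.range m, mgf (Y j) μ t
          ≤ ∏ j ∈ Finset.range m, Real.exp ((n:ℝ) * p j * (Real.exp t - 1)) :=
            Finset.prod_le_prod (fun j _ => mgf_nonneg) (fun j _ => hmgfbd j)
        _ = Real.exp (∑ j ∈ Finset.range m, (n:ℝ) * p j * (Real.exp t - 1)) :=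
            (Real.exp_sum _ _).symm
        _ ≤ Real.exp ((Real.exp t - 1) * ((n:ℝ) * W)) := by
            rw [Real.exp_le_exp]
            have hsum_eq : ∑ j ∈ Finset.range m, (n:ℝ) * p j * (Real.exp t - 1)
                = ((Real.exp t - 1) * (n:ℝ)) * ∑ j ∈ Finset.range m, p j := by
              rw [Finset.mul_sum]
              exact Finset.sum_congr rfl fun j _ => by ring
            rw [hsum_eq]
            nlinarith [mul_nonneg (mul_nonneg hexpt1 hnR.le) (sub_nonneg.2 hps)]
    -- monotone convergence
    set g : ℕ → Ω → ℝ≥0∞ :=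
      fun m ω => ENNReal.ofReal (Real.exp (t * ∑ j ∈ Finset.range m, Y j ω)) with hgdef
    have hgmeas : ∀ m, Measurable (g m) := by
      intro m
      exact ((Finset.measurable_sum (Finset.range m) fun j _ => hYmeas j).const_mul
        t).exp.ennreal_ofReal
    have hgmono : Monotone g := by
      intro a b hab ω
      refine ENNReal.ofReal_le_ofReal (Real.exp_le_exp.2 (mul_le_mul_of_nonneg_left ?_ ht0.le))
      exact Finset.sum_le_sum_of_subset_of_nonneg (Finset.range_subset_range.2 hab)
        (fun j _ _ => (X j ω).cast_nonneg)
    have hglim : ∀ᵐ ω ∂μ, (⨆ m, g m ω) = ENNReal.ofReal (Real.exp (t * T ω)) := by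
      filter_upwards [hfin] with ω hω
      have hsummable : Summable fun j => (X j ω : ℝ) := by
        have h := ENNReal.summable_toReal hω
        simpa using h
      have hts : Filter.Tendsto (fun m => ∑ j ∈ Finset.range m, (X j ω : ℝ))
          Filter.atTop (nhds (T ω)) := hsummable.hasSum.tendsto_sum_nat
      have h2 : Filter.Tendsto (fun m => g m ω) Filter.atTop
          (nhds (ENNReal.ofReal (Real.exp (t * T ω)))) :=
        (ENNReal.continuous_ofReal.tendsto _).comp
          ((Real.continuous_exp.tendsto _).comp (hts.const_mul t))
      exact tendsto_nhds_unique (tendsto_atTop_iSup fun a b hab => hgmono hab ω) h2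
    have hlintT : ∫⁻ ω, ENNReal.ofReal (Real.exp (t * T ω)) ∂μ
        ≤ ENNReal.ofReal (Real.exp ((Real.exp t - 1) * ((n:ℝ) * W))) := by
      rw [← MeasureTheory.lintegral_congr_ae hglim, MeasureTheory.lintegral_iSup hgmeas hgmono]
      refine iSup_le fun m => ?_
      have heq : ∫⁻ ω, g m ω ∂μ = ENNReal.ofReal (mgf (∑ j ∈ Finset.range m, Y j) μ t) := by
        calc ∫⁻ ω, g m ω ∂μ
            = ∫⁻ ω, ENNReal.ofReal (Real.exp (t * (∑ j ∈ Finset.range m, Y j) ω)) ∂μ :=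
              lintegral_congr fun ω => by
                show ENNReal.ofReal (Real.exp (t * ∑ j ∈ Finset.range m, Y j ω)) = _
                rw [Finset.sum_apply]
          _ = ENNReal.ofReal (∫ ω, Real.exp (t * (∑ j ∈ Finset.range m, Y j) ω) ∂μ) :=
              (MeasureTheory.ofReal_integral_eq_lintegral_ofReal (hSm_int m)
                (Filter.Eventually.of_forall fun ω => (Real.exp_pos _).le)).symm
          _ = ENNReal.ofReal (mgf (∑ j ∈ Finset.range m, Y j) μ t) := rfl
      rw [heq]
      exact ENNReal.ofReal_le_ofReal (hSm_mgf m)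
    -- assemble
    set A : ℝ≥0∞ := ∫⁻ ω, ENNReal.ofReal (Real.exp (t * T ω)) ∂μ with hA
    have hAtop : A ≠ ⊤ := (lt_of_le_of_lt hlintT ENNReal.ofReal_lt_top).ne
    have hA1 : 1 ≤ A := by
      rw [hA]
      calc (1:ℝ≥0∞) = ∫⁻ _, 1 ∂μ := by simp
        _ ≤ _ := lintegral_mono fun ω =>
            ENNReal.one_le_ofReal.2 (Real.one_le_exp (mul_nonneg ht0.le (hT0 ω)))
    have hApos : 0 < A.toReal :=
      ENNReal.toReal_pos (by intro h; rw [h] at hA1; simp at hA1) hAtop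
    have hAle : A.toReal ≤ Real.exp ((Real.exp t - 1) * ((n:ℝ) * W)) := by
      calc A.toReal ≤ (ENNReal.ofReal (Real.exp ((Real.exp t - 1) * ((n:ℝ) * W)))).toReal :=
            ENNReal.toReal_mono ENNReal.ofReal_ne_top hlintT
        _ = _ := ENNReal.toReal_ofReal (Real.exp_pos _).le
    have hintegrand : ∀ ω, Real.exp (lam * (T ω / n - W))
        = Real.exp (-(lam * W)) * Real.exp (t * T ω) := by
      intro ω
      rw [← Real.exp_add]
      congr 1
      rw [htdef]
      field_simp
      ring
    have hmeasT2 : Measurable fun ω => Real.exp (t * T ω) := (hTmeas.const_mul t).exp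
    have hIeq : ∫ ω, Real.exp (lam * (T ω / n - W)) ∂μ = Real.exp (-(lam * W)) * A.toReal := by
      simp_rw [hintegrand]
      rw [MeasureTheory.integral_const_mul,
        MeasureTheory.integral_eq_lintegral_of_nonneg_ae
          (Filter.Eventually.of_forall fun ω => (Real.exp_pos _).le)
          hmeasT2.aestronglyMeasurable]
    have hIpos : 0 < ∫ ω, Real.exp (lam * (T ω / n - W)) ∂μ := by
      rw [hIeq]
      positivity
    change Real.log (∫ ω, Real.exp (lam * (T ω / n - W)) ∂μ)
        ≤ (2 * W / n) * lam ^ 2 / (2 * (1 - lam / n))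
    rw [Real.log_le_iff_le_exp hIpos, hIeq]
    have h1t : (0:ℝ) < 1 - t := by linarith
    have hrhs : (2 * W / n) * lam ^ 2 / (2 * (1 - lam / n))
        = (n:ℝ) * W * (t ^ 2 / (1 - t)) := by
      rw [← htdef, hlamt]
      field_simp
    calc Real.exp (-(lam * W)) * A.toReal
        ≤ Real.exp (-(lam * W)) * Real.exp ((Real.exp t - 1) * ((n:ℝ) * W)) :=
          mul_le_mul_of_nonneg_left hAle (Real.exp_pos _).le
      _ = Real.exp ((Real.exp t - 1) * ((n:ℝ) * W) - lam * W) := by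
          rw [← Real.exp_add]; ring_nf
      _ ≤ Real.exp ((2 * W / n) * lam ^ 2 / (2 * (1 - lam / n))) := by
          rw [Real.exp_le_exp, hrhs]
          have hquad : Real.exp t ≤ 1 + t + t ^ 2 := exp_quad ht0.le ht1.le
          have h3 : Real.exp t - 1 - t ≤ t ^ 2 / (1 - t) := by
            have hb : t ^ 2 ≤ t ^ 2 / (1 - t) := by
              rw [le_div_iff₀ h1t]
              nlinarith [sq_nonneg t]
            linarith
          have h4 := mul_le_mul_of_nonneg_left h3
            (mul_nonneg (Nat.cast_nonneg n : (0:ℝ) ≤ n) hW0)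
          have h5 : (Real.exp t - 1) * ((n:ℝ) * W) - lam * W
              = (n:ℝ) * W * (Real.exp t - 1 - t) := by rw [hlamt]; ring
          linarith
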